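/- Let h(α) = 1 - α - 2e^{α} + e^{3α}. Then h(0) = 0, h'(0) = 0, h''(0) = 7, and h(α) > 0 for all α ≠ 0. -/

import Mathlib

/-- `h(α) = 1 - α - 2 e^α + e^{3α}`, equal to `α² e² Z(1)` for the dP₂ soliton. -/
noncomputable def solitonH (α : ℝ) : ℝ := 1 - α - 2 * Real.exp α + Real.exp (3 * α)

lemma exp3_hasDerivAt (α : ℝ) :
    HasDerivAt (fun x : ℝ => Real.exp (3 * x)) (Real.exp (3 * α) * 3) α :=
  (Real.hasDerivAt_exp (3 * α)).comp α (by simpa using (hasDerivAt_id α).const_mul (3 : ℝ))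

lemma solitonH_hasDerivAt (α : ℝ) :
    HasDerivAt solitonH (-1 - 2 * Real.exp α + Real.exp (3 * α) * 3) α := by
  have h := (((hasDerivAt_const α (1 : ℝ)).sub (hasDerivAt_id α)).sub
      ((Real.hasDerivAt_exp α).const_mul 2)).add (exp3_hasDerivAt α)
  have e : (0 : ℝ) - 1 - 2 * Real.exp α + Real.exp (3 * α) * 3
      = -1 - 2 * Real.exp α + Real.exp (3 * α) * 3 := by ring
  rw [← e]
  exact h.congr_of_eventuallyEq (Filter.Eventually.of_forall fun x => by simp [solitonH])

lemma deriv_solitonH :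
    deriv solitonH = fun α => -1 - 2 * Real.exp α + Real.exp (3 * α) * 3 :=
  funext fun α => (solitonH_hasDerivAt α).deriv

lemma deriv2_solitonH (α : ℝ) :
    HasDerivAt (deriv solitonH) (-(2 * Real.exp α) + Real.exp (3 * α) * 3 * 3) α := by
  rw [deriv_solitonH]
  have h := (((hasDerivAt_const α (-1 : ℝ)).sub ((Real.hasDerivAt_exp α).const_mul 2)).add
      ((exp3_hasDerivAt α).mul_const 3))
  have e : (0 : ℝ) - 2 * Real.exp α + Real.exp (3 * α) * 3 * 3
      = -(2 * Real.exp α) + Real.exp (3 * α) * 3 * 3 := by ring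
  rw [← e]
  exact h.congr_of_eventuallyEq (Filter.Eventually.of_forall fun x => by simp [sub_eq_add_neg])

theorem solitonH_props :
    solitonH 0 = 0 ∧ deriv solitonH 0 = 0 ∧ deriv (deriv solitonH) 0 = 7 ∧
      ∀ α : ℝ, α ≠ 0 → 0 < solitonH α := by
  refine ⟨by norm_num [solitonH], ?_, ?_, ?_⟩
  · rw [deriv_solitonH]; norm_num
  · rw [(deriv2_solitonH 0).deriv]; norm_num
  · intro α hα
    have ht : 0 < Real.exp α := Real.exp_pos α
    have hlt : α + 1 < Real.exp α := Real.add_one_lt_exp hα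
    have h3 : Real.exp (3 * α) = (Real.exp α) ^ 3 := by
      rw [show (3 : ℝ) * α = α + α + α by ring, Real.exp_add, Real.exp_add]; ring
    unfold solitonH
    rw [h3]
    nlinarith [mul_nonneg (sq_nonneg (Real.exp α - 1)) (by linarith : (0:ℝ) ≤ Real.exp α + 2)]
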